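/- Let X = {x₁,…,xₙ} and Y = {y₁,…,yₙ} be points in ℝ^d, let ε > 0, t > 0, and let C ∈ ℝ^{n×n} have positive entries with ‖xᵢ − yⱼ‖₁ ≤ (1+ε)·C_{ij} for all i, j. Let λ be a probability distribution on [n]×[n]×{−1,1} with probabilities λ_{i,j,σ}. Define b ∈ ℝ^{2n} by bᵢ = t·Σ_{j∈[n]} Σ_{σ∈{−1,1}} λ_{i,j,σ}·σ/C_{ij} for i ∈ [n] and b_{n+j} = −t·Σ_{i∈[n]} Σ_{σ∈{−1,1}} λ_{i,j,σ}·σ/C_{ij} for j ∈ [n]. Then Σ_{k=1}^{2n} b_k = 0 and EMD_P(b) ≤ (1+ε)·t, where P is the list of 2n points x₁,…,xₙ,y₁,…,yₙ with ℓ₁ costs. -/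

import Mathlib

open Finset

/-- ℓ₁ distance on functions `ι → ℝ`. -/
noncomputable def l1dist {ι : Type} [Fintype ι] (u v : ι → ℝ) : ℝ := ∑ k, |u k - v k|

/-- Min-cost-flow Earth Mover's Distance of a vector `b` (with `∑ b = 0`) with respect to
the cost matrix `cost`. -/
noncomputable def EMDgen {ι : Type} [Fintype ι] (cost : ι → ι → ℝ) (b : ι → ℝ) : ℝ :=
  sInf { c : ℝ | ∃ γ : ι → ι → ℝ, (∀ i j, 0 ≤ γ i j) ∧
    (∀ i, ∑ j, γ i j = max (b i) 0) ∧ (∀ j, ∑ i, γ i j = max (-(b j)) 0) ∧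
    c = ∑ i, ∑ j, γ i j * cost i j }

/-- The sign `σ ∈ {−1, 1}`, encoded by a boolean. -/
def sg (σ : Bool) : ℝ := if σ then 1 else -1


section Reduction
variable {ι : Type} [Fintype ι] [DecidableEq ι]

noncomputable def rS (γ : ι → ι → ℝ) (a : ι) : ℝ := ∑ b, γ a b
noncomputable def cS (γ : ι → ι → ℝ) (b : ι) : ℝ := ∑ a, γ a b
noncomputable def costS (d γ : ι → ι → ℝ) : ℝ := ∑ a, ∑ b, γ a b * d a b

lemma clearNode (d : ι → ι → ℝ) (htri : ∀ a c b, d a b ≤ d a c + d c b)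
    (γ : ι → ι → ℝ) (hγ : ∀ a b, 0 ≤ γ a b) (k : ι) (hkk : γ k k = 0)
    (hO : 0 < rS γ k) (hI : 0 < cS γ k) :
    ∃ γ₂ : ι → ι → ℝ, (∀ a b, 0 ≤ γ₂ a b) ∧
      (∀ a, a ≠ k → rS γ₂ a = rS γ a) ∧ (∀ a, a ≠ k → cS γ₂ a = cS γ a) ∧
      rS γ₂ k = rS γ k - min (rS γ k) (cS γ k) ∧
      cS γ₂ k = cS γ k - min (rS γ k) (cS γ k) ∧
      costS d γ₂ ≤ costS d γ := by
  set O := rS γ k with hOdef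
  set I := cS γ k with hIdef
  set m := min O I with hmdef
  have hO' : O ≠ 0 := ne_of_gt hO
  have hI' : I ≠ 0 := ne_of_gt hI
  have hm0 : 0 ≤ m := le_min hO.le hI.le
  have hmO : m ≤ O := min_le_left _ _
  have hmI : m ≤ I := min_le_right _ _
  have h1O : 0 ≤ 1 - m / O := by
    have : m / O ≤ 1 := (div_le_one hO).mpr hmO
    linarith
  have h1I : 0 ≤ 1 - m / I := by
    have : m / I ≤ 1 := (div_le_one hI).mpr hmI
    linarith
  set γ₂ : ι → ι → ℝ := fun a b =>
    if a = k then (if b = k then 0 else (1 - m / O) * γ k b)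
    else if b = k then (1 - m / I) * γ a k
    else γ a b + m / (I * O) * (γ a k * γ k b) with hγ₂def
  have hsplit : ∀ f : ι → ℝ, ∑ b, f b = f k + ∑ b ∈ Finset.univ.erase k, f b :=
    fun f => (Finset.add_sum_erase _ f (mem_univ k)).symm
  have hSkb : ∑ b ∈ Finset.univ.erase k, γ k b = O := by
    have h := hsplit (γ k)
    rw [hkk, zero_add] at h
    simp only [hOdef, rS]
    exact h.symm
  have hSak : ∑ a ∈ Finset.univ.erase k, γ a k = I := by
    have h := hsplit (fun a => γ a k)
    rw [hkk, zero_add] at h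
    simp only [hIdef, cS]
    exact h.symm
  have hγ₂kk : γ₂ k k = 0 := by simp [hγ₂def]
  refine ⟨γ₂, ?_, ?_, ?_, ?_, ?_, ?_⟩
  · intro a b
    simp only [hγ₂def]
    split_ifs with h1 h2 h3
    · exact le_rfl
    · exact mul_nonneg h1O (hγ _ _)
    · exact mul_nonneg h1I (hγ _ _)
    · have h4 : 0 ≤ m / (I * O) * (γ a k * γ k b) := by
        have := hγ a k; have := hγ k b
        positivity
      have := hγ a b
      linarith
  · -- rows at a ≠ k
    intro a ha
    have hak : γ₂ a k = (1 - m / I) * γ a k := by simp [hγ₂def, ha]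
    have hrest : ∑ b ∈ Finset.univ.erase k, γ₂ a b
        = (∑ b ∈ Finset.univ.erase k, γ a b)
          + m / (I * O) * γ a k * (∑ b ∈ Finset.univ.erase k, γ k b) := by
      rw [Finset.mul_sum, ← Finset.sum_add_distrib]
      refine Finset.sum_congr rfl ?_
      intro b hb
      have hbk : b ≠ k := Finset.ne_of_mem_erase hb
      simp [hγ₂def, ha, hbk]; ring
    have hrow : ∑ b ∈ Finset.univ.erase k, γ a b = (∑ b, γ a b) - γ a k := by
      have h := hsplit (γ a)
      linarith
    simp only [rS]
    rw [hsplit (γ₂ a), hak, hrest, hSkb, hrow]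
    field_simp
    ring
  · -- cols at bb ≠ k
    intro bb hb
    have hkb : γ₂ k bb = (1 - m / O) * γ k bb := by simp [hγ₂def, hb]
    have hrest : ∑ a ∈ Finset.univ.erase k, γ₂ a bb
        = (∑ a ∈ Finset.univ.erase k, γ a bb)
          + m / (I * O) * γ k bb * (∑ a ∈ Finset.univ.erase k, γ a k) := by
      rw [Finset.mul_sum, ← Finset.sum_add_distrib]
      refine Finset.sum_congr rfl ?_
      intro a ha
      have hak : a ≠ k := Finset.ne_of_mem_erase ha
      simp [hγ₂def, hak, hb]; ring
    have hcol : ∑ a ∈ Finset.univ.erase k, γ a bb = (∑ a, γ a bb) - γ k bb := by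
      have h := hsplit (fun a => γ a bb)
      linarith
    simp only [cS]
    rw [hsplit (fun a => γ₂ a bb), hkb, hrest, hSak, hcol]
    field_simp
    ring
  · -- row at k
    have hmain : ∀ b ∈ Finset.univ.erase k, γ₂ k b = (1 - m / O) * γ k b := by
      intro b hb
      have hbk : b ≠ k := Finset.ne_of_mem_erase hb
      simp [hγ₂def, hbk]
    simp only [rS]
    rw [hsplit (γ₂ k), Finset.sum_congr rfl hmain, ← Finset.mul_sum, hSkb, hγ₂kk]
    field_simp
    ring
  · -- col at k
    have hmain : ∀ a ∈ Finset.univ.erase k, γ₂ a k = (1 - m / I) * γ a k := by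
      intro a ha
      have hak : a ≠ k := Finset.ne_of_mem_erase ha
      simp [hγ₂def, hak]
    simp only [cS]
    rw [hsplit (fun a => γ₂ a k), Finset.sum_congr rfl hmain, ← Finset.mul_sum, hSak, hγ₂kk]
    field_simp
    ring
  · -- cost
    set E := Finset.univ.erase k with hE
    have hdec : ∀ g : ι → ι → ℝ, ∑ a, ∑ b, g a b
        = g k k + (∑ b ∈ E, g k b) + (∑ a ∈ E, g a k) + ∑ a ∈ E, ∑ b ∈ E, g a b := by
      intro g
      rw [hsplit (fun a => ∑ b, g a b)]
      have h1 : ∑ b, g k b = g k k + ∑ b ∈ E, g k b := hsplit (g k)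
      have h2 : ∀ a ∈ E, ∑ b, g a b = g a k + ∑ b ∈ E, g a b := fun a _ => hsplit (g a)
      rw [h1, Finset.sum_congr rfl h2, Finset.sum_add_distrib]
      ring
    set A := ∑ a ∈ E, γ a k * d a k with hA
    set B := ∑ b ∈ E, γ k b * d k b with hB
    set Srest := ∑ a ∈ E, ∑ b ∈ E, γ a b * d a b with hSrest
    set T := ∑ a ∈ E, ∑ b ∈ E, (γ a k * γ k b) * d a b with hT
    have hcost1 : costS d γ = B + A + Srest := by
      rw [costS, hdec (fun a b => γ a b * d a b)]
      simp only [hkk, zero_mul, zero_add]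
      rfl
    have hcost2 : costS d γ₂ = (1 - m / O) * B + (1 - m / I) * A + Srest + m / (I * O) * T := by
      rw [costS, hdec (fun a b => γ₂ a b * d a b)]
      simp only [hγ₂kk, zero_mul, zero_add]
      have e1 : ∑ b ∈ E, γ₂ k b * d k b = (1 - m / O) * B := by
        rw [hB, Finset.mul_sum]
        refine Finset.sum_congr rfl ?_
        intro b hb
        have hbk : b ≠ k := Finset.ne_of_mem_erase hb
        simp [hγ₂def, hbk]; ring
      have e2 : ∑ a ∈ E, γ₂ a k * d a k = (1 - m / I) * A := by
        rw [hA, Finset.mul_sum]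
        refine Finset.sum_congr rfl ?_
        intro a ha
        have hak : a ≠ k := Finset.ne_of_mem_erase ha
        simp [hγ₂def, hak]; ring
      have e3 : ∑ a ∈ E, ∑ b ∈ E, γ₂ a b * d a b = Srest + m / (I * O) * T := by
        rw [hSrest, hT, Finset.mul_sum, ← Finset.sum_add_distrib]
        refine Finset.sum_congr rfl ?_
        intro a ha
        have hak : a ≠ k := Finset.ne_of_mem_erase ha
        rw [Finset.mul_sum, ← Finset.sum_add_distrib]
        refine Finset.sum_congr rfl ?_
        intro b hb
        have hbk : b ≠ k := Finset.ne_of_mem_erase hb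
        simp [hγ₂def, hak, hbk]; ring
      rw [e1, e2, e3]
      ring
    have hTle : T ≤ A * O + I * B := by
      have step1 : T ≤ ∑ a ∈ E, ∑ b ∈ E, (γ a k * γ k b) * (d a k + d k b) := by
        rw [hT]
        refine Finset.sum_le_sum ?_
        intro a _
        refine Finset.sum_le_sum ?_
        intro b _
        exact mul_le_mul_of_nonneg_left (htri a k b) (mul_nonneg (hγ _ _) (hγ _ _))
      have step2 : ∑ a ∈ E, ∑ b ∈ E, (γ a k * γ k b) * (d a k + d k b) = A * O + I * B := by
        have inner : ∀ a ∈ E, ∑ b ∈ E, (γ a k * γ k b) * (d a k + d k b)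
            = (γ a k * d a k) * O + γ a k * B := by
          intro a _
          rw [hB, ← hSkb, Finset.mul_sum, Finset.mul_sum, ← Finset.sum_add_distrib]
          refine Finset.sum_congr rfl ?_
          intro b _
          ring
        rw [Finset.sum_congr rfl inner, Finset.sum_add_distrib, ← Finset.sum_mul,
          ← Finset.sum_mul, hA, hSak]

      linarith
    have key : m / (I * O) * T ≤ m / I * A + m / O * B := by
      have h1 : m / (I * O) * T ≤ m / (I * O) * (A * O + I * B) :=
        mul_le_mul_of_nonneg_left hTle (by positivity)
      have h2 : m / (I * O) * (A * O + I * B) = m / I * A + m / O * B := by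
        field_simp
      linarith
    rw [hcost1, hcost2]
    nlinarith [key]

end Reduction

section Reduction2
variable {ι : Type} [Fintype ι] [DecidableEq ι]

lemma reduceAll (d : ι → ι → ℝ) (hd0 : ∀ a, d a a = 0)
    (htri : ∀ a c b, d a b ≤ d a c + d c b)
    (s : Finset ι) :
    ∀ γ : ι → ι → ℝ, (∀ a b, 0 ≤ γ a b) →
    ∃ γ' : ι → ι → ℝ, (∀ a b, 0 ≤ γ' a b) ∧
      (∀ a, rS γ' a - cS γ' a = rS γ a - cS γ a) ∧
      (∀ a ∈ s, min (rS γ' a) (cS γ' a) = 0) ∧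
      costS d γ' ≤ costS d γ := by
  induction s using Finset.induction_on with
  | empty =>
    intro γ hγ
    exact ⟨γ, hγ, fun a => rfl, fun a ha => absurd ha (Finset.notMem_empty a), le_rfl⟩
  | @insert k s hk ih =>
    intro γ hγ
    obtain ⟨γ₁, hγ₁, hdiff₁, hmin₁, hcost₁⟩ := ih γ hγ
    -- clear the loop at k
    set γ₁' : ι → ι → ℝ := fun a b => if a = k ∧ b = k then 0 else γ₁ a b with hdef
    have hγ₁' : ∀ a b, 0 ≤ γ₁' a b := by
      intro a b
      simp only [hdef]
      split_ifs
      · exact le_rfl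
      · exact hγ₁ a b
    have hkk : γ₁' k k = 0 := by simp [hdef]
    have hrow' : ∀ a, a ≠ k → rS γ₁' a = rS γ₁ a := by
      intro a ha
      simp only [rS]
      refine Finset.sum_congr rfl fun b _ => ?_
      simp [hdef, ha]
    have hcol' : ∀ b, b ≠ k → cS γ₁' b = cS γ₁ b := by
      intro b hb
      simp only [cS]
      refine Finset.sum_congr rfl fun a _ => ?_
      simp [hdef, hb]
    have hrowk : rS γ₁' k = rS γ₁ k - γ₁ k k := by
      simp only [rS]
      have h1 : ∀ f : ι → ℝ, ∑ b, f b = f k + ∑ b ∈ Finset.univ.erase k, f b :=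
        fun f => (Finset.add_sum_erase _ f (mem_univ k)).symm
      rw [h1 (γ₁' k), h1 (γ₁ k)]
      have e : ∑ b ∈ Finset.univ.erase k, γ₁' k b = ∑ b ∈ Finset.univ.erase k, γ₁ k b := by
        refine Finset.sum_congr rfl fun b hb => ?_
        have : b ≠ k := Finset.ne_of_mem_erase hb
        simp [hdef, this]
      rw [e, hkk]
      ring
    have hcolk : cS γ₁' k = cS γ₁ k - γ₁ k k := by
      simp only [cS]
      have h1 : ∀ f : ι → ℝ, ∑ b, f b = f k + ∑ b ∈ Finset.univ.erase k, f b :=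
        fun f => (Finset.add_sum_erase _ f (mem_univ k)).symm
      rw [h1 (fun a => γ₁' a k), h1 (fun a => γ₁ a k)]
      have e : ∑ a ∈ Finset.univ.erase k, γ₁' a k = ∑ a ∈ Finset.univ.erase k, γ₁ a k := by
        refine Finset.sum_congr rfl fun a ha => ?_
        have : a ≠ k := Finset.ne_of_mem_erase ha
        simp [hdef, this]
      rw [e, hkk]
      ring
    have hcost' : costS d γ₁' = costS d γ₁ := by
      simp only [costS]
      refine Finset.sum_congr rfl fun a _ => Finset.sum_congr rfl fun b _ => ?_
      by_cases hab : a = k ∧ b = k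
      · obtain ⟨ha, hb⟩ := hab
        subst ha; subst hb
        simp [hdef, hd0]
      · simp [hdef, hab]
    have hrnn : 0 ≤ rS γ₁' k := Finset.sum_nonneg fun b _ => hγ₁' k b
    have hcnn : 0 ≤ cS γ₁' k := Finset.sum_nonneg fun a _ => hγ₁' a k
    by_cases hpos : 0 < rS γ₁' k ∧ 0 < cS γ₁' k
    · obtain ⟨γ₂, hγ₂, hr₂, hc₂, hrk₂, hck₂, hcost₂⟩ :=
        clearNode d htri γ₁' hγ₁' k hkk hpos.1 hpos.2
      refine ⟨γ₂, hγ₂, ?_, ?_, ?_⟩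
      · intro a
        by_cases ha : a = k
        · rw [ha, hrk₂, hck₂, hrowk, hcolk]
          linarith [hdiff₁ k]
        · rw [hr₂ a ha, hc₂ a ha, hrow' a ha, hcol' a ha]
          exact hdiff₁ a
      · intro a ha
        rcases Finset.mem_insert.mp ha with h | h
        · rw [h, hrk₂, hck₂, min_sub_sub_right]
          exact sub_self _
        · have hak : a ≠ k := fun hh => hk (hh ▸ h)
          rw [hr₂ a hak, hc₂ a hak, hrow' a hak, hcol' a hak]
          exact hmin₁ a h
      · calc costS d γ₂ ≤ costS d γ₁' := hcost₂
          _ = costS d γ₁ := hcost'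
          _ ≤ costS d γ := hcost₁
    · -- min is already 0 at k
      have hmin0 : min (rS γ₁' k) (cS γ₁' k) = 0 := by
        rcases not_and_or.mp hpos with h | h
        · have : rS γ₁' k = 0 := le_antisymm (not_lt.mp h) hrnn
          rw [this]
          exact min_eq_left hcnn |>.trans rfl
        · have : cS γ₁' k = 0 := le_antisymm (not_lt.mp h) hcnn
          rw [this]
          exact min_eq_right hrnn |>.trans rfl
      refine ⟨γ₁', hγ₁', ?_, ?_, ?_⟩
      · intro a
        by_cases ha : a = k
        · rw [ha, hrowk, hcolk]
          linarith [hdiff₁ k]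
        · rw [hrow' a ha, hcol' a ha]
          exact hdiff₁ a
      · intro a ha
        rcases Finset.mem_insert.mp ha with h | h
        · rw [h]; exact hmin0
        · have hak : a ≠ k := fun hh => hk (hh ▸ h)
          rw [hrow' a hak, hcol' a hak]
          exact hmin₁ a h
      · rw [hcost']
        exact hcost₁

end Reduction2



lemma l1dist_nonneg' {ι : Type} [Fintype ι] (u v : ι → ℝ) : 0 ≤ l1dist u v :=
  Finset.sum_nonneg fun _ _ => abs_nonneg _

lemma l1dist_self' {ι : Type} [Fintype ι] (u : ι → ℝ) : l1dist u u = 0 := by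
  simp [l1dist]

lemma l1dist_comm' {ι : Type} [Fintype ι] (u v : ι → ℝ) : l1dist u v = l1dist v u := by
  unfold l1dist
  exact Finset.sum_congr rfl fun k _ => abs_sub_comm _ _

lemma l1dist_triangle' {ι : Type} [Fintype ι] (u v w : ι → ℝ) :
    l1dist u w ≤ l1dist u v + l1dist v w := by
  unfold l1dist
  rw [← Finset.sum_add_distrib]
  exact Finset.sum_le_sum fun k _ => abs_sub_le _ _ _

lemma marg_eq (x' y' b' : ℝ) (hx : 0 ≤ x') (hy : 0 ≤ y') (hmin : min x' y' = 0)
    (hd : x' - y' = b') : x' = max b' 0 ∧ y' = max (-b') 0 := by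
  rcases le_total x' y' with h | h
  · have hx0 : x' = 0 := by rw [min_eq_left h] at hmin; exact hmin
    have hb : b' ≤ 0 := by linarith
    constructor
    · rw [hx0, max_eq_right hb]
    · have : -b' = y' := by linarith
      rw [this, max_eq_left hy]
  · have hy0 : y' = 0 := by rw [min_eq_right h] at hmin; exact hmin
    have hb : 0 ≤ b' := by linarith
    constructor
    · rw [max_eq_left hb]; linarith
    · rw [hy0]
      have : -b' ≤ 0 := by linarith
      rw [max_eq_right this]

/-- the supply/demand vector `b` induced by a distribution `λ` on
`[n]×[n]×{−1,1}` sums to zero and has `EMD_P(b) ≤ (1+ε)·t`, where `P` is the list of the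
`2n` points `x₁,…,xₙ,y₁,…,yₙ` with ℓ₁ costs. -/
theorem certify_flow_bound {n D : ℕ} (x y : Fin n → Fin D → ℝ) (ε t : ℝ)
    (hε : 0 < ε) (ht : 0 < t)
    (C : Fin n → Fin n → ℝ) (hCpos : ∀ i j, 0 < C i j)
    (hC : ∀ i j, l1dist (x i) (y j) ≤ (1 + ε) * C i j)
    (lam : Fin n → Fin n → Bool → ℝ) (hlam : ∀ i j σ, 0 ≤ lam i j σ)
    (hsum : ∑ i, ∑ j, ∑ σ, lam i j σ = 1)
    (b : Fin n ⊕ Fin n → ℝ)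
    (hb1 : ∀ i, b (Sum.inl i) = t * ∑ j, ∑ σ, lam i j σ * sg σ / C i j)
    (hb2 : ∀ j, b (Sum.inr j) = -(t * ∑ i, ∑ σ, lam i j σ * sg σ / C i j)) :
    (∑ k, b k = 0) ∧
    EMDgen (fun p q => l1dist (Sum.elim x y p) (Sum.elim x y q)) b ≤ (1 + ε) * t := by
  classical
  set d : (Fin n ⊕ Fin n) → (Fin n ⊕ Fin n) → ℝ :=
    fun p q => l1dist (Sum.elim x y p) (Sum.elim x y q) with hd
  constructor
  · -- sum of b is zero
    rw [Fintype.sum_sum_type]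
    have e1 : ∑ i, b (Sum.inl i) = t * ∑ i, ∑ j, ∑ σ, lam i j σ * sg σ / C i j := by
      simp only [hb1]
      rw [Finset.mul_sum]
    have e2 : ∑ j, b (Sum.inr j) = -(t * ∑ j, ∑ i, ∑ σ, lam i j σ * sg σ / C i j) := by
      simp only [hb2]
      rw [Finset.sum_neg_distrib, Finset.mul_sum]
    rw [e1, e2, Finset.sum_comm]
    ring
  · -- EMD bound
    set γ₀ : (Fin n ⊕ Fin n) → (Fin n ⊕ Fin n) → ℝ := fun p q =>
      Sum.elim (fun i => Sum.elim (fun _ => (0:ℝ)) (fun j => t * lam i j true / C i j) q)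
               (fun j => Sum.elim (fun i => t * lam i j false / C i j) (fun _ => (0:ℝ)) q) p
      with hγ₀
    have hγ₀nn : ∀ p q, 0 ≤ γ₀ p q := by
      intro p q
      rcases p with i | j <;> rcases q with i' | j' <;> simp only [hγ₀, Sum.elim_inl, Sum.elim_inr] <;>
        first
          | exact le_rfl
          | exact div_nonneg (mul_nonneg ht.le (hlam _ _ _)) (hCpos _ _).le
    have hrl : ∀ i, rS γ₀ (Sum.inl i) = ∑ j, t * lam i j true / C i j := by
      intro i
      rw [rS, Fintype.sum_sum_type]
      simp [hγ₀]
    have hcl : ∀ i, cS γ₀ (Sum.inl i) = ∑ j, t * lam i j false / C i j := by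
      intro i
      rw [cS, Fintype.sum_sum_type]
      simp [hγ₀]
    have hrr : ∀ j, rS γ₀ (Sum.inr j) = ∑ i, t * lam i j false / C i j := by
      intro j
      rw [rS, Fintype.sum_sum_type]
      simp [hγ₀]
    have hcr : ∀ j, cS γ₀ (Sum.inr j) = ∑ i, t * lam i j true / C i j := by
      intro j
      rw [cS, Fintype.sum_sum_type]
      simp [hγ₀]
    have hdiff : ∀ p, rS γ₀ p - cS γ₀ p = b p := by
      intro p
      rcases p with i | j
      · rw [hrl, hcl, hb1 i, Finset.mul_sum, ← Finset.sum_sub_distrib]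
        refine Finset.sum_congr rfl fun j _ => ?_
        rw [Fintype.sum_bool]
        simp only [sg]
        norm_num
        ring
      · rw [hrr, hcr, hb2 j, Finset.mul_sum, ← Finset.sum_neg_distrib,
          ← Finset.sum_sub_distrib]
        refine Finset.sum_congr rfl fun i _ => ?_
        rw [Fintype.sum_bool]
        simp only [sg]
        norm_num
        ring
    have ecost : costS d γ₀
        = (∑ i, ∑ j, t * lam i j true / C i j * l1dist (x i) (y j))
          + ∑ j, ∑ i, t * lam i j false / C i j * l1dist (y j) (x i) := by
      rw [costS, Fintype.sum_sum_type]
      congr 1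
      · refine Finset.sum_congr rfl fun i _ => ?_
        rw [Fintype.sum_sum_type]
        simp [hγ₀, hd]
      · refine Finset.sum_congr rfl fun j _ => ?_
        rw [Fintype.sum_sum_type]
        simp [hγ₀, hd]
    have key : ∀ (l cij dij : ℝ), 0 ≤ l → 0 < cij → dij ≤ (1 + ε) * cij →
        t * l / cij * dij ≤ (1 + ε) * (t * l) := by
      intro l cij dij hl hc hdij
      have hnn : 0 ≤ t * l / cij := div_nonneg (mul_nonneg ht.le hl) hc.le
      have h1 : t * l / cij * dij ≤ t * l / cij * ((1 + ε) * cij) :=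
        mul_le_mul_of_nonneg_left hdij hnn
      have h2 : t * l / cij * ((1 + ε) * cij) = (1 + ε) * (t * l) := by
        field_simp
      linarith
    have hcost0 : costS d γ₀ ≤ (1 + ε) * t := by
      have hstep : costS d γ₀
          ≤ (∑ i, ∑ j, (1 + ε) * (t * lam i j true))
            + ∑ j, ∑ i, (1 + ε) * (t * lam i j false) := by
        rw [ecost]
        refine add_le_add ?_ ?_
        · refine Finset.sum_le_sum fun i _ => Finset.sum_le_sum fun j _ => ?_
          exact key _ _ _ (hlam _ _ _) (hCpos i j) (hC i j)
        · refine Finset.sum_le_sum fun j _ => Finset.sum_le_sum fun i _ => ?_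
          rw [l1dist_comm']
          exact key _ _ _ (hlam _ _ _) (hCpos i j) (hC i j)
      have hcomm : ∑ j, ∑ i, (1 + ε) * (t * lam i j false)
          = ∑ i, ∑ j, (1 + ε) * (t * lam i j false) := Finset.sum_comm
      have htot : (∑ i, ∑ j, (1 + ε) * (t * lam i j true))
          + ∑ i, ∑ j, (1 + ε) * (t * lam i j false) = (1 + ε) * t := by
        rw [← Finset.sum_add_distrib]
        have : ∀ i, (∑ j, (1 + ε) * (t * lam i j true)) + ∑ j, (1 + ε) * (t * lam i j false)
            = (1 + ε) * t * ∑ j, ∑ σ, lam i j σ := by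
          intro i
          rw [Finset.mul_sum, ← Finset.sum_add_distrib]
          refine Finset.sum_congr rfl fun j _ => ?_
          rw [Fintype.sum_bool]
          ring
        rw [Finset.sum_congr rfl fun i _ => this i, ← Finset.mul_sum, hsum, mul_one]
      rw [hcomm] at hstep
      rw [htot] at hstep
      exact hstep
    obtain ⟨γ', hγ', hdiff', hmin', hcost'⟩ :=
      reduceAll d (fun a => by simp only [hd]; exact l1dist_self' _)
        (fun a c b' => by simp only [hd]; exact l1dist_triangle' _ _ _)
        Finset.univ γ₀ hγ₀nn
    have hrows : ∀ p, rS γ' p = max (b p) 0 ∧ cS γ' p = max (-(b p)) 0 := by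
      intro p
      refine marg_eq _ _ _ (Finset.sum_nonneg fun q _ => hγ' p q)
        (Finset.sum_nonneg fun q _ => hγ' q p) (hmin' p (Finset.mem_univ p)) ?_
      rw [hdiff' p, hdiff p]
    have hbdd : BddBelow {c : ℝ | ∃ γ : (Fin n ⊕ Fin n) → (Fin n ⊕ Fin n) → ℝ,
        (∀ i j, 0 ≤ γ i j) ∧ (∀ i, ∑ j, γ i j = max (b i) 0) ∧
        (∀ j, ∑ i, γ i j = max (-(b j)) 0) ∧ c = ∑ i, ∑ j, γ i j * d i j} := by
      refine ⟨0, fun c hc => ?_⟩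
      obtain ⟨γ'', hnn, -, -, rfl⟩ := hc
      exact Finset.sum_nonneg fun i _ => Finset.sum_nonneg fun j _ =>
        mul_nonneg (hnn i j) (by simp only [hd]; exact l1dist_nonneg' _ _)
    have hmem : costS d γ' ∈ {c : ℝ | ∃ γ : (Fin n ⊕ Fin n) → (Fin n ⊕ Fin n) → ℝ,
        (∀ i j, 0 ≤ γ i j) ∧ (∀ i, ∑ j, γ i j = max (b i) 0) ∧
        (∀ j, ∑ i, γ i j = max (-(b j)) 0) ∧ c = ∑ i, ∑ j, γ i j * d i j} :=
      ⟨γ', hγ', fun i => (hrows i).1, fun j => (hrows j).2, rfl⟩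
    calc EMDgen d b ≤ costS d γ' := by
          rw [EMDgen]
          exact csInf_le hbdd hmem
      _ ≤ costS d γ₀ := hcost'
      _ ≤ (1 + ε) * t := hcost0
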